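/- Let T: C → E be a unital weak trace functor on a monoidal category C, i.e. a weak trace functor satisfying T(r_X) ∘ tr_{𝟙,X} = T(l_X) for all X. Then tr_{Y,X} ∘ tr_{X,Y} = id_{T(X⊗Y)} for all objects X, Y of C. -/

import Mathlib

/-!
STATEMENT 2: Let `T : C → E` be a unital weak trace functor on a monoidal
category `C`, i.e. a weak trace functor satisfying `T(r_X) ∘ tr_{𝟙,X} = T(l_X)`
for all `X`.  Then `tr_{Y,X} ∘ tr_{X,Y} = id_{T(X ⊗ Y)}` for all objects `X, Y`.
-/

open CategoryTheory MonoidalCategory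

universe v u v' u'

theorem stmt_2 {C : Type u} [Category.{v} C] [MonoidalCategory C]
    {E : Type u'} [Category.{v'} E]
    (T : C ⥤ E)
    (tr : ∀ X Y : C, T.obj (X ⊗ Y) ≅ T.obj (Y ⊗ X))
    (tr_natural : ∀ {X X' Y Y' : C} (f : X ⟶ X') (g : Y ⟶ Y'),
      T.map (f ⊗ₘ g) ≫ (tr X' Y').hom = (tr X Y).hom ≫ T.map (g ⊗ₘ f))
    (trace0 : ∀ X Y Z : C,
      (tr Z (X ⊗ Y)).hom =
        T.map (α_ Z X Y).inv ≫ (tr (Z ⊗ X) Y).hom ≫ T.map (α_ Y Z X).inv ≫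
          (tr (Y ⊗ Z) X).hom ≫ T.map (α_ X Y Z).inv)
    (unital : ∀ X : C, (tr (𝟙_ C) X).hom ≫ T.map (ρ_ X).hom = T.map (λ_ X).hom) :
    ∀ X Y : C, (tr X Y).hom ≫ (tr Y X).hom = 𝟙 (T.obj (X ⊗ Y)) := by
  intro X Y
  have h1 : (tr ((𝟙_ C) ⊗ X) Y).hom
      = T.map ((λ_ X).hom ⊗ₘ 𝟙 Y) ≫ (tr X Y).hom ≫ T.map (𝟙 Y ⊗ₘ (λ_ X).inv) := by
    rw [← Category.assoc, tr_natural (λ_ X).hom (𝟙 Y), Category.assoc,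
      ← T.map_comp, MonoidalCategory.tensorHom_comp_tensorHom]
    simp
  have h2 : (tr (Y ⊗ (𝟙_ C)) X).hom
      = T.map ((ρ_ Y).hom ⊗ₘ 𝟙 X) ≫ (tr Y X).hom ≫ T.map (𝟙 X ⊗ₘ (ρ_ Y).inv) := by
    rw [← Category.assoc, tr_natural (ρ_ Y).hom (𝟙 X), Category.assoc,
      ← T.map_comp, MonoidalCategory.tensorHom_comp_tensorHom]
    simp
  have hu : (tr (𝟙_ C) (X ⊗ Y)).hom
      = T.map (λ_ (X ⊗ Y)).hom ≫ T.map (ρ_ (X ⊗ Y)).inv := by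
    rw [← unital (X ⊗ Y)]
    simp [← T.map_comp]
  have h := trace0 X Y (𝟙_ C)
  rw [h1, h2, hu] at h
  have cA : (α_ (𝟙_ C) X Y).inv ≫ ((λ_ X).hom ⊗ₘ 𝟙 Y) = (λ_ (X ⊗ Y)).hom := by
    coherence
  have cB : (𝟙 Y ⊗ₘ (λ_ X).inv) ≫ (α_ Y (𝟙_ C) X).inv ≫ ((ρ_ Y).hom ⊗ₘ 𝟙 X)
      = 𝟙 (Y ⊗ X) := by
    coherence
  have cC : (𝟙 X ⊗ₘ (ρ_ Y).inv) ≫ (α_ X Y (𝟙_ C)).inv = (ρ_ (X ⊗ Y)).inv := by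
    coherence
  have key : T.map (λ_ (X ⊗ Y)).hom ≫ T.map (ρ_ (X ⊗ Y)).inv
      = T.map (λ_ (X ⊗ Y)).hom ≫ (tr X Y).hom ≫ (tr Y X).hom
          ≫ T.map (ρ_ (X ⊗ Y)).inv := by
    rw [h]
    simp only [Category.assoc, ← T.map_comp_assoc, ← T.map_comp]
    rw [cA, cC, cB]
    simp
  rw [← cancel_epi (T.map (λ_ (X ⊗ Y)).hom), ← cancel_mono (T.map (ρ_ (X ⊗ Y)).inv)]
  simp only [Category.assoc, Category.comp_id, Category.id_comp]
  exact key.symm
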